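/- Let U ⊆ ℂ be open, let 0 < δ < 1/2, and let ψ : U → ℂ be holomorphic with |ψ(z) − 1| < δ for all z ∈ U. Let g : U → ℂ be the principal square root of ψ. If a, b ∈ U are points such that the closed line segment [a, b] is contained in U, then the ψ-holonomy w_J = ∫₀¹ g(a + t(b − a))·(b − a) dt of the segment and its Euclidean holonomy z_J = b − a satisfy |z_J − w_J| ≤ δ·|z_J|, with strict inequality when a ≠ b; in particular, w_J ≠ 0 whenever a ≠ b. -/

import Mathlib

/-- `g` is the principal square root of `ψ` on `U`: it is holomorphic on `U`, with
`g² = ψ` and `Re g > 0` on `U`. -/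
def IsPrincipalSqrtOn (U : Set ℂ) (ψ g : ℂ → ℂ) : Prop :=
  DifferentiableOn ℂ g U ∧ ∀ z ∈ U, g z ^ 2 = ψ z ∧ 0 < (g z).re

/-- Holonomy estimate (Lemma 2.4 of the paper): if `ψ` is holomorphic on an open set
`U` with `|ψ − 1| < δ < 1/2` on `U`, `g` is the principal square root of `ψ`, and the
segment `[a,b]` lies in `U`, then the `ψ`-holonomy `w_J = ∫₀¹ g(a + t(b−a))·(b−a) dt`
of the segment and the Euclidean holonomy `z_J = b − a` satisfy
`|z_J − w_J| ≤ δ·|z_J|`, strictly when `a ≠ b`; in particular `w_J ≠ 0` when `a ≠ b`. -/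
theorem holonomy_estimate (U : Set ℂ) (hU : IsOpen U) (δ : ℝ)
    (hδ0 : 0 < δ) (hδ : δ < 1 / 2) (ψ g : ℂ → ℂ)
    (hψ : DifferentiableOn ℂ ψ U)
    (hψb : ∀ z ∈ U, ‖ψ z - 1‖ < δ)
    (hg : IsPrincipalSqrtOn U ψ g)
    (a b : ℂ) (ha : a ∈ U) (hb : b ∈ U)
    (hseg : segment ℝ a b ⊆ U) :
    ‖(b - a) - ∫ t in (0:ℝ)..1, g (a + (t : ℂ) * (b - a)) * (b - a)‖
        ≤ δ * ‖b - a‖ ∧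
    (a ≠ b →
      ‖(b - a) - ∫ t in (0:ℝ)..1, g (a + (t : ℂ) * (b - a)) * (b - a)‖
        < δ * ‖b - a‖) ∧
    (a ≠ b → (∫ t in (0:ℝ)..1, g (a + (t : ℂ) * (b - a)) * (b - a)) ≠ 0) := by
  obtain ⟨hgdiff, hgprop⟩ := hg
  have hgcont : ContinuousOn g U := hgdiff.continuousOn
  -- pointwise bound |g - 1| < δ on U
  have hbound : ∀ w ∈ U, ‖g w - 1‖ < δ := by
    intro w hw
    obtain ⟨hsq, hre⟩ := hgprop w hw
    have h1 : (1:ℝ) ≤ ‖g w + 1‖ := by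
      have : (1:ℝ) ≤ (g w + 1).re := by simp [Complex.add_re]; linarith
      exact this.trans (Complex.re_le_norm _)
    have h2 : ‖g w - 1‖ * ‖g w + 1‖ = ‖ψ w - 1‖ := by
      rw [← norm_mul]; congr 1; rw [← hsq]; ring
    have h3 := hψb w hw
    nlinarith [norm_nonneg (g w - 1)]
  rcases eq_or_ne a b with hab | hab
  · subst hab
    simp
  -- main case
  set z : ℂ := b - a with hzdef
  have hzne : z ≠ 0 := sub_ne_zero.mpr (Ne.symm hab)
  have hzpos : 0 < ‖z‖ := norm_pos_iff.mpr hzne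
  have hmem : ∀ t ∈ Set.Icc (0:ℝ) 1, a + (t : ℂ) * z ∈ U := by
    intro t ht
    apply hseg
    rw [segment_eq_image']
    exact ⟨t, ht, by simp [Complex.real_smul, hzdef]⟩
  have hγcont : ContinuousOn (fun t : ℝ => g (a + (t : ℂ) * z)) (Set.Icc 0 1) := by
    apply hgcont.comp
    · exact (Continuous.continuousOn (by continuity))
    · exact hmem
  have huIcc : Set.uIcc (0:ℝ) 1 = Set.Icc 0 1 := Set.uIcc_of_le zero_le_one
  have hInt : IntervalIntegrable (fun t : ℝ => g (a + (t : ℂ) * z) * z)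
      MeasureTheory.volume 0 1 := by
    apply ContinuousOn.intervalIntegrable
    rw [huIcc]
    exact hγcont.mul continuousOn_const
  -- rewrite difference as integral
  have key : z - (∫ t in (0:ℝ)..1, g (a + (t : ℂ) * z) * z)
      = ∫ t in (0:ℝ)..1, (1 - g (a + (t : ℂ) * z)) * z := by
    have hInt2 : IntervalIntegrable (fun _ : ℝ => z) MeasureTheory.volume 0 1 :=
      intervalIntegrable_const
    rw [show (fun t : ℝ => (1 - g (a + (t : ℂ) * z)) * z)
        = fun t : ℝ => z - g (a + (t : ℂ) * z) * z from funext fun t => by ring]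
    rw [intervalIntegral.integral_sub hInt2 hInt]
    simp
  -- strict bound via max on compact
  obtain ⟨t₀, ht₀mem, ht₀max⟩ :=
    isCompact_Icc.exists_isMaxOn (Set.nonempty_Icc.mpr zero_le_one)
      ((continuousOn_const.sub hγcont).norm)
  have hMlt : ‖(1 - g (a + (t₀ : ℂ) * z))‖ < δ := by
    have := hbound _ (hmem t₀ ht₀mem)
    calc ‖(1 - g (a + (t₀ : ℂ) * z))‖
        = ‖g (a + (t₀ : ℂ) * z) - 1‖ := by
          rw [norm_sub_rev]
      _ < δ := this
  have hstrict : ‖z - ∫ t in (0:ℝ)..1, g (a + (t : ℂ) * z) * z‖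
      < δ * ‖z‖ := by
    rw [key]
    calc ‖∫ t in (0:ℝ)..1, (1 - g (a + (t : ℂ) * z)) * z‖
        ≤ ‖(1 - g (a + (t₀ : ℂ) * z))‖ * ‖z‖ * |(1:ℝ) - 0| := by
          apply intervalIntegral.norm_integral_le_of_norm_le_const
          intro t ht
          have ht' : t ∈ Set.Icc (0:ℝ) 1 := Set.mem_Icc_of_Ioc (by simpa using ht)
          have := ht₀max ht'
          simp only [Set.mem_setOf_eq] at this
          calc ‖(1 - g (a + (t : ℂ) * z)) * z‖
              = ‖(1 - g (a + (t : ℂ) * z))‖ * ‖z‖ := by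
                simp [norm_mul]
            _ ≤ ‖(1 - g (a + (t₀ : ℂ) * z))‖ * ‖z‖ :=
                mul_le_mul_of_nonneg_right this (norm_nonneg z)
      _ = ‖(1 - g (a + (t₀ : ℂ) * z))‖ * ‖z‖ := by norm_num
      _ < δ * ‖z‖ := by
          exact mul_lt_mul_of_pos_right hMlt hzpos
  refine ⟨le_of_lt hstrict, fun _ => hstrict, fun _ hw => ?_⟩
  rw [hw, sub_zero] at hstrict
  have : δ * ‖z‖ < ‖z‖ := by nlinarith
  linarith
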